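/- Let V, W be closed subspaces of a Hilbert space H such that W is a compact perturbation of V (i.e. P_W − P_V is compact). Then (V, W^⊥) is a Fredholm pair, so the relative dimension dim(V, W) := dim(V ∩ W^⊥) − dim(V^⊥ ∩ W) is a well-defined integer. -/

import Mathlib

noncomputable section

/-- Closed subspaces `V, W` form a Fredholm pair if `V ∩ W` is finite dimensional,
`V + W` is closed, and `V + W` has finite codimension. -/
def IsFredholmPair {E : Type*} [NormedAddCommGroup E] [NormedSpace ℝ E]
    (V W : Submodule ℝ E) : Prop :=
  FiniteDimensional ℝ ↥(V ⊓ W) ∧ IsClosed ((V ⊔ W : Submodule ℝ E) : Set E) ∧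
    FiniteDimensional ℝ (E ⧸ (V ⊔ W))

open Metric Filter

/-- A closed subspace on which a compact operator acts as a nonzero scalar is
finite dimensional (Riesz). -/
theorem aux_findim_eigen {H : Type*} [NormedAddCommGroup H] [NormedSpace ℝ H]
    (K : H →L[ℝ] H) (hK : IsCompactOperator K) (S : Submodule ℝ H)
    (hS : IsClosed (S : Set H)) (c : ℝ) (hc : c ≠ 0)
    (h : ∀ x ∈ S, K x = c • x) : FiniteDimensional ℝ ↥S := by
  obtain ⟨M, hM, hMmem⟩ := hK
  obtain ⟨ε, εpos, hball⟩ := Metric.mem_nhds_iff.mp hMmem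
  set r : ℝ := ε / 2 with hr
  have hrpos : 0 < r := by positivity
  -- the closed ball of `S` is compact
  have hTsub : (S : Set H) ∩ closedBall 0 r ⊆ (c⁻¹ • ·) '' M := by
    rintro x ⟨hxS, hxb⟩
    have hxr : ‖x‖ ≤ r := by simpa using hxb
    have hxball : x ∈ ball (0 : H) ε := by
      simp only [mem_ball, dist_zero_right]
      linarith [half_lt_self εpos]
    have hKM : K x ∈ M := hball hxball
    rw [h x hxS] at hKM
    exact ⟨c • x, hKM, by simp [smul_smul, inv_mul_cancel₀ hc]⟩
  have hTcl : IsClosed ((S : Set H) ∩ closedBall 0 r) :=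
    hS.inter Metric.isClosed_closedBall
  have hTcomp : IsCompact ((S : Set H) ∩ closedBall 0 r) :=
    ((hM.image (continuous_const_smul c⁻¹)).of_isClosed_subset hTcl hTsub)
  have himg : Subtype.val '' (closedBall (0 : ↥S) r) = (S : Set H) ∩ closedBall 0 r := by
    ext x
    constructor
    · rintro ⟨⟨y, hy⟩, hyb, rfl⟩
      exact ⟨hy, by simpa [dist_eq_norm] using hyb⟩
    · rintro ⟨hxS, hxb⟩
      exact ⟨⟨x, hxS⟩, by simpa [dist_eq_norm, Submodule.coe_norm] using hxb, rfl⟩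
  have hcomp : IsCompact (closedBall (0 : ↥S) r) := by
    rw [Topology.IsEmbedding.isCompact_iff (Topology.IsEmbedding.subtypeVal)]
    rwa [himg]
  exact FiniteDimensional.of_isCompact_closedBall₀ ℝ hrpos hcomp

/-- In a Hilbert space, the sup of a closed subspace and a finite dimensional
subspace is closed. -/
theorem aux_isClosed_sup {H : Type*} [NormedAddCommGroup H] [InnerProductSpace ℝ H]
    [CompleteSpace H] (R F : Submodule ℝ H) (hR : IsClosed (R : Set H))
    [FiniteDimensional ℝ ↥F] : IsClosed ((R ⊔ F : Submodule ℝ H) : Set H) := by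
  haveI : CompleteSpace ↥R := hR.completeSpace_coe
  set Q : H →L[ℝ] H := R.subtypeL.comp R.orthogonalProjectionOnto with hQ
  have hQmem : ∀ x : H, Q x ∈ R := fun x => (R.orthogonalProjectionOnto x).2
  have hQself : ∀ x ∈ R, Q x = x := fun x hx => by
    have := Submodule.orthogonalProjectionOnto_mem_subspace_eq_self (⟨x, hx⟩ : ↥R)
    simp only [hQ, ContinuousLinearMap.comp_apply, Submodule.subtypeL_apply]
    rw [this]
  have hQzero : ∀ x ∈ Rᗮ, Q x = 0 := fun x hx => by
    have := Submodule.orthogonalProjectionOnto_apply_of_mem_orthogonal hx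
    simp only [hQ, ContinuousLinearMap.comp_apply, Submodule.subtypeL_apply]
    rw [this]; simp
  have hQorth : ∀ x : H, x - Q x ∈ Rᗮ := fun x =>
    Submodule.sub_starProjection_mem_orthogonal (K := R) x
  set L : H →L[ℝ] H := ContinuousLinearMap.id ℝ H - Q with hL
  have hLapp : ∀ x : H, L x = x - Q x := fun x => rfl
  set F' : Submodule ℝ H := F.map (L : H →ₗ[ℝ] H) with hF'
  haveI : FiniteDimensional ℝ ↥F' := Module.Finite.map F (L : H →ₗ[ℝ] H)
  have hF'orth : F' ≤ Rᗮ := by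
    rintro _ ⟨f, hf, rfl⟩
    exact hQorth f
  have hsup : R ⊔ F = R ⊔ F' := by
    apply le_antisymm
    · refine sup_le le_sup_left fun f hf => ?_
      have : f = Q f + L f := by rw [hLapp]; abel
      rw [this]
      exact Submodule.add_mem _ (Submodule.mem_sup_left (hQmem f))
        (Submodule.mem_sup_right ⟨f, hf, rfl⟩)
    · refine sup_le le_sup_left ?_
      rintro _ ⟨f, hf, rfl⟩
      show L f ∈ R ⊔ F
      rw [hLapp f]
      exact Submodule.sub_mem _ (Submodule.mem_sup_right hf)
        (Submodule.mem_sup_left (hQmem f))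
  rw [hsup]
  have hset : ((R ⊔ F' : Submodule ℝ H) : Set H) = (fun x => x - Q x) ⁻¹' (F' : Set H) := by
    ext x
    simp only [Set.mem_preimage, SetLike.mem_coe]
    constructor
    · intro hx
      obtain ⟨r, hr, f, hf, rfl⟩ := Submodule.mem_sup.mp hx
      have : Q (r + f) = r := by
        rw [map_add, hQself r hr, hQzero f (hF'orth hf), add_zero]
      rw [this]; simpa using hf
    · intro hx
      have : x = Q x + (x - Q x) := by abel
      rw [this]
      exact Submodule.add_mem _ (Submodule.mem_sup_left (hQmem x))
        (Submodule.mem_sup_right hx)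
  rw [hset]
  exact (F'.closed_of_finiteDimensional).preimage (continuous_id.sub Q.continuous)

open RealInnerProductSpace in
/-- Basic facts about an orthogonal projection given by its characteristic property. -/
theorem aux_proj_facts {H : Type*} [NormedAddCommGroup H] [InnerProductSpace ℝ H]
    (V : Submodule ℝ H) (P : H →L[ℝ] H) (hP : ∀ x : H, P x ∈ V ∧ x - P x ∈ Vᗮ) :
    (∀ x ∈ V, P x = x) ∧ (∀ x ∈ Vᗮ, P x = 0) ∧ (∀ x y : H, ⟪P x, y⟫ = ⟪x, P y⟫) := by
  have horth : ∀ u ∈ V, ∀ w ∈ Vᗮ, ⟪u, w⟫ = 0 := fun u hu w hw =>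
    (Submodule.mem_orthogonal V w).mp hw u hu
  have hself : ∀ x ∈ V, P x = x := by
    intro x hx
    have hmem : x - P x ∈ V := V.sub_mem hx (hP x).1
    have h0 : ⟪x - P x, x - P x⟫ = 0 := horth _ hmem _ (hP x).2
    have h1 : x - P x = 0 := by rwa [inner_self_eq_zero] at h0
    have := sub_eq_zero.mp h1
    exact this.symm
  have hzero : ∀ x ∈ Vᗮ, P x = 0 := by
    intro x hx
    have hmem : P x ∈ Vᗮ := by
      have := Vᗮ.sub_mem hx (hP x).2
      simpa using this
    have h0 : ⟪P x, P x⟫ = 0 := horth _ (hP x).1 _ hmem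
    rwa [inner_self_eq_zero] at h0
  refine ⟨hself, hzero, fun x y => ?_⟩
  have h1 : ⟪P x, y⟫ = ⟪P x, P y⟫ := by
    have h0 : ⟪P x, y - P y⟫ = 0 := horth _ (hP x).1 _ (hP y).2
    rw [inner_sub_right] at h0
    linarith
  have h2 : ⟪x, P y⟫ = ⟪P x, P y⟫ := by
    have h0 : ⟪P y, x - P x⟫ = 0 := horth _ (hP y).1 _ (hP x).2
    rw [real_inner_comm, inner_sub_left] at h0
    linarith
  rw [h1, h2]

open Filter Metric Topology NNReal in
/-- The range of `I - K` is closed for a compact operator `K` on a Hilbert space. -/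
theorem aux_range_closed {H : Type*} [NormedAddCommGroup H] [InnerProductSpace ℝ H]
    [CompleteSpace H] (K : H →L[ℝ] H) (hK : IsCompactOperator ⇑K) :
    IsClosed (Set.range ⇑(ContinuousLinearMap.id ℝ H - K)) := by
  set D : H →L[ℝ] H := ContinuousLinearMap.id ℝ H - K with hD
  have hDapp : ∀ x : H, D x = x - K x := fun x => rfl
  -- the kernel of `D` is finite dimensional
  haveI hker : FiniteDimensional ℝ ↥(LinearMap.ker (D : H →ₗ[ℝ] H)) := by
    refine aux_findim_eigen K hK _ (ContinuousLinearMap.isClosed_ker D) 1 one_ne_zero ?_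
    intro x hx
    have h0 : x - K x = 0 := hx
    rw [one_smul]
    exact (sub_eq_zero.mp h0).symm
  haveI : CompleteSpace ↥(LinearMap.ker (D : H →ₗ[ℝ] H)) := FiniteDimensional.complete ℝ _
  set N : Submodule ℝ H := (LinearMap.ker (D : H →ₗ[ℝ] H))ᗮ with hN
  haveI : CompleteSpace ↥N := (Submodule.isClosed_orthogonal _).completeSpace_coe
  set T : ↥N →L[ℝ] H := D.comp N.subtypeL with hT
  have hTapp : ∀ x : ↥N, T x = D (x : H) := fun x => rfl
  -- `T` is bounded below
  have hbound : ∃ c : ℝ, 0 ≤ c ∧ ∀ x : ↥N, ‖x‖ ≤ c * ‖T x‖ := by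
    by_contra hcon
    push_neg at hcon
    have hstep : ∀ n : ℕ, ∃ u : ↥N, ‖u‖ = 1 ∧ ‖T u‖ < 1 / ((n : ℝ) + 1) := by
      intro n
      obtain ⟨x, hx⟩ := hcon ((n : ℝ) + 1) (by positivity)
      have hxne : x ≠ 0 := by
        intro h0
        rw [h0] at hx
        simp at hx
      have hxpos : (0 : ℝ) < ‖x‖ := norm_pos_iff.mpr hxne
      refine ⟨‖x‖⁻¹ • x, ?_, ?_⟩
      · rw [norm_smul, norm_inv, norm_norm, inv_mul_cancel₀ (ne_of_gt hxpos)]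
      · rw [map_smul, norm_smul, norm_inv, norm_norm]
        have h1 : ‖T x‖ < ‖x‖ / ((n:ℝ)+1) := by
          rw [lt_div_iff₀ (by positivity)]
          linarith [hx]
        calc ‖x‖⁻¹ * ‖T x‖ < ‖x‖⁻¹ * (‖x‖ / ((n:ℝ)+1)) :=
              mul_lt_mul_of_pos_left h1 (by positivity)
          _ = 1 / ((n:ℝ)+1) := by
              rw [div_eq_mul_inv, ← mul_assoc, inv_mul_cancel₀ (ne_of_gt hxpos), one_mul, one_div]
    choose u hu1 hu2 using hstep
    have hTu0 : Tendsto (fun n => T (u n)) atTop (𝓝 0) := by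
      rw [tendsto_zero_iff_norm_tendsto_zero]
      refine squeeze_zero (fun n => norm_nonneg _) (fun n => le_of_lt (hu2 n)) ?_
      exact tendsto_one_div_add_atTop_nhds_zero_nat
    -- extract a convergent subsequence of `K (u n)`
    have hucb : ∀ n : ℕ, K ((u n : H)) ∈ closure (⇑K '' closedBall 0 1) := by
      intro n
      apply subset_closure
      refine ⟨(u n : H), ?_, rfl⟩
      rw [mem_closedBall_zero_iff]
      have : ‖(u n : H)‖ = ‖u n‖ := rfl
      rw [this, hu1 n]
    obtain ⟨y, -, φ, hφ, hconv⟩ :=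
      (hK.isCompact_closure_image_closedBall 1).tendsto_subseq hucb
    have hφt : Tendsto φ atTop atTop := hφ.tendsto_atTop
    have hTu0' : Tendsto (fun n => T (u (φ n))) atTop (𝓝 0) := hTu0.comp hφt
    have hvconv : Tendsto (fun n => ((u (φ n) : H))) atTop (𝓝 y) := by
      have heq : ∀ n, ((u (φ n) : H)) = T (u (φ n)) + K ((u (φ n) : H)) := by
        intro n
        rw [hTapp, hDapp]
        abel
      have := hTu0'.add hconv
      rw [zero_add] at this
      exact this.congr (fun n => (heq n).symm)
    have hyN : y ∈ N := by
      refine (hN ▸ (Submodule.isClosed_orthogonal (LinearMap.ker (D : H →ₗ[ℝ] H)))).mem_of_tendsto hvconv ?_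
      exact Eventually.of_forall (fun n => (u (φ n)).2)
    have hynorm : ‖y‖ = 1 := by
      have h1 : Tendsto (fun n => ‖((u (φ n) : H))‖) atTop (𝓝 ‖y‖) := hvconv.norm
      have h2 : (fun n => ‖((u (φ n) : H))‖) = fun _ => (1:ℝ) := by
        funext n
        rw [← Submodule.coe_norm, hu1 (φ n)]
      rw [h2] at h1
      exact (tendsto_const_nhds_iff.mp h1).symm
    have hyker : y ∈ LinearMap.ker (D : H →ₗ[ℝ] H) := by
      have h1 : Tendsto (fun n => D ((u (φ n) : H))) atTop (𝓝 (D y)) :=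
        (D.continuous.tendsto y).comp hvconv
      have h2 : (fun n => D ((u (φ n) : H))) = fun n => T (u (φ n)) := by
        funext n; rw [hTapp]
      rw [h2] at h1
      exact LinearMap.mem_ker.mpr (tendsto_nhds_unique h1 hTu0')
    have hy0 : y = 0 :=
      (Submodule.orthogonal_disjoint (LinearMap.ker (D : H →ₗ[ℝ] H))).le_bot ⟨hyker, hyN⟩
    rw [hy0, norm_zero] at hynorm
    exact one_ne_zero hynorm.symm
  obtain ⟨c, hc0, hc⟩ := hbound
  have hanti : AntilipschitzWith c.toNNReal ⇑T := by
    refine AddMonoidHomClass.antilipschitz_of_bound T fun x => ?_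
    calc ‖x‖ ≤ c * ‖T x‖ := hc x
      _ = (c.toNNReal : ℝ) * ‖T x‖ := by rw [Real.coe_toNNReal c hc0]
  have hclosedT : IsClosed (Set.range ⇑T) := hanti.isClosed_range T.uniformContinuous
  have hrange : Set.range ⇑D = Set.range ⇑T := by
    ext x
    constructor
    · rintro ⟨z, rfl⟩
      obtain ⟨a, ha, b, hb, rfl⟩ := (LinearMap.ker (D : H →ₗ[ℝ] H)).exists_add_mem_mem_orthogonal z
      refine ⟨⟨b, hb⟩, ?_⟩
      rw [hTapp]
      simp only [map_add]
      rw [show D a = 0 from LinearMap.mem_ker.mp ha, zero_add]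
    · rintro ⟨z, rfl⟩
      exact ⟨(z : H), rfl⟩
  rw [hrange]
  exact hclosedT

open RealInnerProductSpace

/-- If `V, W` are closed subspaces of a Hilbert space `H` and `W` is a compact
perturbation of `V` (the difference `P_W − P_V` of the orthogonal projections is a compact
operator), then `(V, W^⊥)` is a Fredholm pair; in particular both `V ∩ W^⊥` and `V^⊥ ∩ W`
are finite dimensional, so the relative dimension
`dim(V,W) = dim(V ∩ W^⊥) − dim(V^⊥ ∩ W)` is a well-defined integer. -/
theorem stmt_8 {H : Type*} [NormedAddCommGroup H] [InnerProductSpace ℝ H] [CompleteSpace H]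
    (V W : Submodule ℝ H) (hV : IsClosed (V : Set H)) (hW : IsClosed (W : Set H))
    (PV PW : H →L[ℝ] H)
    (hPV : ∀ x : H, PV x ∈ V ∧ x - PV x ∈ Vᗮ)
    (hPW : ∀ x : H, PW x ∈ W ∧ x - PW x ∈ Wᗮ)
    (hcpt : IsCompactOperator (PW - PV)) :
    IsFredholmPair V Wᗮ ∧
      FiniteDimensional ℝ ↥(V ⊓ Wᗮ) ∧ FiniteDimensional ℝ ↥(Vᗮ ⊓ W) := by
    classical
  obtain ⟨hVself, hVzero, hVsym⟩ := aux_proj_facts V PV hPV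
  obtain ⟨hWself, hWzero, hWsym⟩ := aux_proj_facts W PW hPW
  set K : H →L[ℝ] H := PW - PV with hKdef
  have hKapp : ∀ x : H, K x = PW x - PV x := fun x => rfl
  have hcptK : IsCompactOperator ⇑K := hcpt
  -- finite dimensionality of the two intersections
  haveI hfd1 : FiniteDimensional ℝ ↥(V ⊓ Wᗮ) := by
    refine aux_findim_eigen K hcptK _ (hV.inter (Submodule.isClosed_orthogonal W))
      (-1) (by norm_num) ?_
    rintro x ⟨hxV, hxW⟩
    rw [hKapp, hWzero x hxW, hVself x hxV]
    simp
  haveI hfd2 : FiniteDimensional ℝ ↥(Vᗮ ⊓ W) := by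
    refine aux_findim_eigen K hcptK _ ((Submodule.isClosed_orthogonal V).inter hW)
      1 one_ne_zero ?_
    rintro x ⟨hxV, hxW⟩
    rw [hKapp, hWself x hxW, hVzero x hxV]
    simp
  -- the operator `D = I - K`
  set D : H →L[ℝ] H := ContinuousLinearMap.id ℝ H - K with hD
  have hDapp : ∀ x : H, D x = x - K x := fun x => rfl
  haveI hkerfd : FiniteDimensional ℝ ↥(LinearMap.ker (D : H →ₗ[ℝ] H)) := by
    refine aux_findim_eigen K hcptK _ (ContinuousLinearMap.isClosed_ker D) 1 one_ne_zero ?_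
    intro x hx
    have h0 : x - K x = 0 := hx
    rw [one_smul]
    exact (sub_eq_zero.mp h0).symm
  set R : Submodule ℝ H := LinearMap.range (D : H →ₗ[ℝ] H) with hR
  have hRclosed : IsClosed (R : Set H) := by
    have : (R : Set H) = Set.range ⇑D := by
      ext x; simp [hR, LinearMap.mem_range, Set.mem_range]
    rw [this]
    exact aux_range_closed K hcptK
  -- D is symmetric, so Rᗮ = ker D
  have hKsym : ∀ x y : H, ⟪K x, y⟫ = ⟪x, K y⟫ := by
    intro x y
    rw [hKapp, hKapp, inner_sub_left, inner_sub_right, hVsym, hWsym]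
  have hDsym : ∀ x y : H, ⟪D x, y⟫ = ⟪x, D y⟫ := by
    intro x y
    rw [hDapp, hDapp, inner_sub_left, inner_sub_right, hKsym]
  have hRorth : Rᗮ = LinearMap.ker (D : H →ₗ[ℝ] H) := by
    ext y
    rw [Submodule.mem_orthogonal, LinearMap.mem_ker]
    constructor
    · intro h
      have h1 : ∀ x : H, ⟪x, D y⟫ = 0 := fun x => by
        rw [← hDsym]
        exact h (D x) ⟨x, rfl⟩ ▸ h (D x) (LinearMap.mem_range.mpr ⟨x, rfl⟩)
      have := h1 (D y)
      rwa [inner_self_eq_zero] at this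
    · intro h u hu
      obtain ⟨x, rfl⟩ := LinearMap.mem_range.mp hu
      simp only [ContinuousLinearMap.coe_coe] at h ⊢
      rw [hDsym, h, inner_zero_right]
  haveI : CompleteSpace ↥R := hRclosed.completeSpace_coe
  -- R ≤ V ⊔ Wᗮ
  have hle : R ≤ V ⊔ Wᗮ := by
    rintro _ ⟨x, rfl⟩
    have hfor : D x = PV x + (x - PW x) := by
      show x - (PW x - PV x) = PV x + (x - PW x)
      abel
    rw [ContinuousLinearMap.coe_coe, hfor]
    exact Submodule.add_mem _ (Submodule.mem_sup_left (hPV x).1)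
      (Submodule.mem_sup_right (hPW x).2)
  -- the modular decomposition V ⊔ Wᗮ = R ⊔ F with F finite dimensional
  have hsuptop : R ⊔ Rᗮ = ⊤ := Submodule.sup_orthogonal_of_hasOrthogonalProjection
  have hmod : V ⊔ Wᗮ = R ⊔ (Rᗮ ⊓ (V ⊔ Wᗮ)) := by
    have h := sup_inf_assoc_of_le (Rᗮ) hle
    rw [hsuptop, top_inf_eq] at h
    exact h
  haveI : FiniteDimensional ℝ ↥(Rᗮ) := by rw [hRorth]; exact hkerfd
  haveI hFfd : FiniteDimensional ℝ ↥(Rᗮ ⊓ (V ⊔ Wᗮ)) :=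
    Submodule.finiteDimensional_of_le (inf_le_left)
  have hclosed : IsClosed ((V ⊔ Wᗮ : Submodule ℝ H) : Set H) := by
    rw [hmod]
    exact aux_isClosed_sup R (Rᗮ ⊓ (V ⊔ Wᗮ)) hRclosed
  -- the quotient is finite dimensional
  haveI hquotR : FiniteDimensional ℝ (H ⧸ R) :=
    Module.Finite.equiv (R.quotientEquivOfIsCompl Rᗮ
      Submodule.isCompl_orthogonal_of_hasOrthogonalProjection).symm
  have hqfd : FiniteDimensional ℝ (H ⧸ (V ⊔ Wᗮ)) := by
    have hsurj : Function.Surjective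
        ⇑(Submodule.mapQ R (V ⊔ Wᗮ) LinearMap.id (by simpa using hle)) := by
      intro y
      obtain ⟨x, rfl⟩ := Submodule.mkQ_surjective _ y
      exact ⟨R.mkQ x, by simp [Submodule.mapQ_apply]⟩
    exact Module.Finite.of_surjective _ hsurj
  exact ⟨⟨hfd1, hclosed, hqfd⟩, hfd1, hfd2⟩
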